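/- (Mass conservation of CNFP) Let 0 < ε ≤ 1, τ > 0, and let V^{n+1/2}_j, A^{n+1/2}_{1,j} ∈ ℝ for j = 0,…,N and n ≥ 0. Suppose the sequence of periodic grid functions Φⁿ (n ≥ 0) satisfies the CNFP scheme: iδ⁺_tΦⁿ_j = −iσ₁ (D^f_x Φ^{n+1/2})_j + σ₃ Φ^{n+1/2}_j + ε(V^{n+1/2}_j I₂ − A^{n+1/2}_{1,j}σ₁)Φ^{n+1/2}_j for all j = 0,…,N−1 and n ≥ 0. Then ‖Φⁿ‖_{l²} = ‖Φ⁰‖_{l²} for all n ≥ 0. -/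

import Mathlib

open Complex Matrix Finset

noncomputable section

/-- The Pauli matrix σ₁. -/
def σ1 : Matrix (Fin 2) (Fin 2) ℂ := !![0, 1; 1, 0]

/-- The Pauli matrix σ₃. -/
def σ3 : Matrix (Fin 2) (Fin 2) ℂ := !![1, 0; 0, -1]

/-- The index set 𝒯_N = {−N/2, …, N/2−1}. -/
def TN (N : ℕ) : Finset ℤ := Finset.Icc (-(N : ℤ) / 2) ((N : ℤ) / 2 - 1)

/-- The Fourier frequency μ_l = 2πl/(b−a); `bma` stands for b−a. -/
def μ (bma : ℝ) (l : ℤ) : ℝ := 2 * Real.pi * l / bma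

/-- The Fourier pseudospectral derivative of a periodic grid function:
(D^f_x U)_j = (i/N) ∑_{k=0}^{N−1} ∑_{l∈𝒯_N} μ_l e^{2i(j−k)lπ/N} U_k. -/
def Dfx (N : ℕ) (bma : ℝ) (U : ℤ → Fin 2 → ℂ) (j : ℤ) : Fin 2 → ℂ :=
  (Complex.I / (N : ℂ)) • ∑ k ∈ Finset.range N, ∑ l ∈ TN N,
    ((μ bma l : ℝ) : ℂ) •
      (Complex.exp (2 * Complex.I * ((j : ℂ) - (k : ℂ)) * (l : ℂ) * (Real.pi : ℂ) / (N : ℂ)) •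
        U (k : ℤ))

/-- The time average Φ^{n+1/2}. -/
def mid (Φ : ℕ → ℤ → Fin 2 → ℂ) (n : ℕ) (j : ℤ) : Fin 2 → ℂ :=
  (2 : ℂ)⁻¹ • (Φ (n + 1) j + Φ n j)

private lemma normSq_diff (a b : ℂ) :
    ‖a‖^2 - ‖b‖^2 = ((starRingEnd ℂ) (a - b) * (a + b)).re := by
  simp [Complex.sq_norm, Complex.normSq_apply, Complex.mul_re,
    Complex.sub_re, Complex.add_re, Complex.sub_im, Complex.add_im]
  ring

private lemma conj_exp_term (N : ℕ) (j k : ℕ) (l : ℤ) :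
    (starRingEnd ℂ) (Complex.exp (2 * Complex.I * ((j:ℂ) - (k:ℂ)) * (l:ℂ) * (Real.pi:ℂ) / (N:ℂ))) =
      Complex.exp (2 * Complex.I * ((k:ℂ) - (j:ℂ)) * (l:ℂ) * (Real.pi:ℂ) / (N:ℂ)) := by
  rw [← Complex.exp_conj]
  congr 1
  simp [map_div₀, Complex.conj_I, Complex.conj_ofReal, map_ofNat]
  ring

private lemma S_im_zero (N : ℕ) (bma : ℝ) (m : ℤ → Fin 2 → ℂ) :
    (∑ j ∈ Finset.range N, ∑ k ∈ Finset.range N, ∑ l ∈ TN N,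
      ((μ bma l : ℝ) : ℂ) *
        Complex.exp (2 * Complex.I * ((k:ℂ) - (j:ℂ)) * (l:ℂ) * (Real.pi:ℂ) / (N:ℂ)) *
        ((starRingEnd ℂ) (m k 1) * m (j:ℤ) 0 + (starRingEnd ℂ) (m k 0) * m (j:ℤ) 1)).im = 0 := by
  rw [← Complex.conj_eq_iff_im]
  simp only [map_sum]
  rw [Finset.sum_comm]
  refine Finset.sum_congr rfl fun j _ => Finset.sum_congr rfl fun k _ =>
    Finset.sum_congr rfl fun l _ => ?_
  rw [_root_.map_mul, _root_.map_mul, map_add, _root_.map_mul, _root_.map_mul,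
    Complex.conj_conj, Complex.conj_conj, Complex.conj_ofReal, conj_exp_term]
  ring

private lemma QD_im_zero (N : ℕ) (bma : ℝ) (m : ℤ → Fin 2 → ℂ) :
    (∑ j ∈ Finset.range N,
      (Complex.I * (starRingEnd ℂ) (Dfx N bma m (j:ℤ) 1) * m (j:ℤ) 0 +
       Complex.I * (starRingEnd ℂ) (Dfx N bma m (j:ℤ) 0) * m (j:ℤ) 1)).im = 0 := by
  have hd : ∀ (j : ℕ) (i : Fin 2), Dfx N bma m (j:ℤ) i =
      (Complex.I / (N:ℂ)) * ∑ k ∈ Finset.range N, ∑ l ∈ TN N,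
        ((μ bma l : ℝ) : ℂ) *
          (Complex.exp (2 * Complex.I * ((j:ℂ) - (k:ℂ)) * (l:ℂ) * (Real.pi:ℂ) / (N:ℂ)) *
            m (k:ℤ) i) := by
    intro j i
    simp [Dfx, Finset.sum_apply, Pi.smul_apply, smul_eq_mul]
  have hcd : ∀ (j : ℕ) (i : Fin 2), (starRingEnd ℂ) (Dfx N bma m (j:ℤ) i) =
      (-Complex.I / (N:ℂ)) * ∑ k ∈ Finset.range N, ∑ l ∈ TN N,
        ((μ bma l : ℝ) : ℂ) *
          (Complex.exp (2 * Complex.I * ((k:ℂ) - (j:ℂ)) * (l:ℂ) * (Real.pi:ℂ) / (N:ℂ)) *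
            (starRingEnd ℂ) (m (k:ℤ) i)) := by
    intro j i
    rw [hd j i]
    simp only [_root_.map_mul, map_div₀, map_sum, Complex.conj_I, Complex.conj_ofReal,
      map_natCast, conj_exp_term]
  have hmain : (∑ j ∈ Finset.range N,
      (Complex.I * (starRingEnd ℂ) (Dfx N bma m (j:ℤ) 1) * m (j:ℤ) 0 +
       Complex.I * (starRingEnd ℂ) (Dfx N bma m (j:ℤ) 0) * m (j:ℤ) 1)) =
      ((N:ℂ))⁻¹ * ∑ j ∈ Finset.range N, ∑ k ∈ Finset.range N, ∑ l ∈ TN N,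
        ((μ bma l : ℝ) : ℂ) *
          Complex.exp (2 * Complex.I * ((k:ℂ) - (j:ℂ)) * (l:ℂ) * (Real.pi:ℂ) / (N:ℂ)) *
          ((starRingEnd ℂ) (m k 1) * m (j:ℤ) 0 + (starRingEnd ℂ) (m k 0) * m (j:ℤ) 1) := by
    rw [Finset.mul_sum]
    refine Finset.sum_congr rfl fun j _ => ?_
    rw [hcd j 0, hcd j 1]
    simp only [Finset.mul_sum, Finset.sum_mul, mul_add, Finset.sum_add_distrib]
    refine congrArg₂ (· + ·) ?_ ?_
    · refine Finset.sum_congr rfl fun k _ => Finset.sum_congr rfl fun l _ => ?_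
      linear_combination (-( (N:ℂ)⁻¹ * ((μ bma l : ℝ) : ℂ) *
        Complex.exp (2 * Complex.I * ((k:ℂ) - (j:ℂ)) * (l:ℂ) * (Real.pi:ℂ) / (N:ℂ)) *
        (starRingEnd ℂ) (m k 1) * m (j:ℤ) 0)) * Complex.I_mul_I
    · refine Finset.sum_congr rfl fun k _ => Finset.sum_congr rfl fun l _ => ?_
      linear_combination (-( (N:ℂ)⁻¹ * ((μ bma l : ℝ) : ℂ) *
        Complex.exp (2 * Complex.I * ((k:ℂ) - (j:ℂ)) * (l:ℂ) * (Real.pi:ℂ) / (N:ℂ)) *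
        (starRingEnd ℂ) (m k 0) * m (j:ℤ) 1)) * Complex.I_mul_I
  rw [hmain]
  have : ((N:ℂ))⁻¹ = ((((N:ℝ))⁻¹ : ℝ) : ℂ) := by push_cast; ring
  rw [this, Complex.mul_im, S_im_zero]
  simp

/-- Mass conservation of the Crank–Nicolson Fourier pseudospectral (CNFP)
method for the 1D Dirac equation.  Here `Vh n j` and `Ah n j` denote the
potential values `V^{n+1/2}_j` and `A^{n+1/2}_{1,j}`. -/
theorem cnfp_mass_conservation (a b : ℝ) (hab : a < b) (N : ℕ) (hN : 0 < N)
    (hNe : Even N) (h : ℝ) (hh : h = (b - a) / N)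
    (τ ε : ℝ) (hτ : 0 < τ) (hε0 : 0 < ε) (hε1 : ε ≤ 1)
    (Vh Ah : ℕ → ℤ → ℝ)
    (Φ : ℕ → ℤ → Fin 2 → ℂ)
    (hper : ∀ n : ℕ, ∀ j : ℤ, Φ n (j + N) = Φ n j)
    (hscheme : ∀ n : ℕ, ∀ j : ℤ,
      Complex.I • ((τ : ℂ)⁻¹ • (Φ (n + 1) j - Φ n j)) =
        (-Complex.I) • σ1.mulVec (Dfx N (b - a) (mid Φ n) j) + σ3.mulVec (mid Φ n j) +
          (ε : ℂ) • (((Vh n j : ℝ) : ℂ) • mid Φ n j -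
            ((Ah n j : ℝ) : ℂ) • σ1.mulVec (mid Φ n j))) :
    ∀ n : ℕ, Real.sqrt (h * ∑ j ∈ Finset.range N, ∑ i, ‖Φ n (j : ℤ) i‖ ^ 2) =
      Real.sqrt (h * ∑ j ∈ Finset.range N, ∑ i, ‖Φ 0 (j : ℤ) i‖ ^ 2) := by
  have key : ∀ n : ℕ,
      (∑ j ∈ Finset.range N, ∑ i, ‖Φ (n+1) (j:ℤ) i‖ ^ 2) =
        ∑ j ∈ Finset.range N, ∑ i, ‖Φ n (j:ℤ) i‖ ^ 2 := by
    intro n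
    have hτ' : (τ:ℂ) ≠ 0 := Complex.ofReal_ne_zero.mpr hτ.ne'
    set m : ℤ → Fin 2 → ℂ := mid Φ n with hm
    set d : ℤ → Fin 2 → ℂ := Dfx N (b - a) m with hd
    have hs1 : ∀ v : Fin 2 → ℂ, σ1.mulVec v = ![v 1, v 0] := by
      intro v; funext i; fin_cases i <;>
        simp [σ1, Matrix.mulVec, dotProduct, Fin.sum_univ_two]
    have hs3 : ∀ v : Fin 2 → ℂ, σ3.mulVec v = ![v 0, -(v 1)] := by
      intro v; funext i; fin_cases i <;>
        simp [σ3, Matrix.mulVec, dotProduct, Fin.sum_univ_two]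
    have hsum2 : ∀ (j : ℤ) (i : Fin 2), Φ (n+1) j i + Φ n j i = 2 * m j i := by
      intro j i
      rw [hm]
      simp [mid]
    have hcomp : ∀ (j : ℤ) (i : Fin 2),
        Φ (n+1) j i - Φ n j i = (-Complex.I) * (τ:ℂ) *
          ((-Complex.I) * (σ1.mulVec (d j)) i + (σ3.mulVec (m j)) i
            + (ε:ℂ) * (((Vh n j : ℝ):ℂ) * m j i - ((Ah n j : ℝ):ℂ) * (σ1.mulVec (m j)) i)) := by
      intro j i
      have h0 := congrFun (hscheme n j) i
      rw [← hm, ← hd] at h0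
      simp only [Pi.smul_apply, Pi.add_apply, Pi.sub_apply, smul_eq_mul] at h0
      field_simp at h0
      linear_combination (-Complex.I) * h0 + (Φ (n+1) j i - Φ n j i) * Complex.I_mul_I
    have hj : ∀ j : ℕ,
        ((∑ i, ‖Φ (n+1) (j:ℤ) i‖ ^ 2) - ∑ i, ‖Φ n (j:ℤ) i‖ ^ 2)
          = (-(2*τ)) * (Complex.I * (starRingEnd ℂ) (d (j:ℤ) 1) * m (j:ℤ) 0 +
              Complex.I * (starRingEnd ℂ) (d (j:ℤ) 0) * m (j:ℤ) 1).im := by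
      intro j
      have hz :
          (starRingEnd ℂ) (Φ (n+1) (j:ℤ) 0 - Φ n (j:ℤ) 0) * (Φ (n+1) (j:ℤ) 0 + Φ n (j:ℤ) 0) +
          (starRingEnd ℂ) (Φ (n+1) (j:ℤ) 1 - Φ n (j:ℤ) 1) * (Φ (n+1) (j:ℤ) 1 + Φ n (j:ℤ) 1) =
          ((2*τ : ℝ):ℂ) * (Complex.I *
            ((Complex.I * (starRingEnd ℂ) (d (j:ℤ) 1) * m (j:ℤ) 0 +
              Complex.I * (starRingEnd ℂ) (d (j:ℤ) 0) * m (j:ℤ) 1) +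
             ((starRingEnd ℂ) (m (j:ℤ) 0) * m (j:ℤ) 0 -
              (starRingEnd ℂ) (m (j:ℤ) 1) * m (j:ℤ) 1 +
              (ε:ℂ) * (((Vh n (j:ℤ) : ℝ):ℂ) *
                  ((starRingEnd ℂ) (m (j:ℤ) 0) * m (j:ℤ) 0 +
                   (starRingEnd ℂ) (m (j:ℤ) 1) * m (j:ℤ) 1) -
                ((Ah n (j:ℤ) : ℝ):ℂ) *
                  ((starRingEnd ℂ) (m (j:ℤ) 1) * m (j:ℤ) 0 +
                   (starRingEnd ℂ) (m (j:ℤ) 0) * m (j:ℤ) 1))))) := by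
        rw [hcomp (j:ℤ) 0, hcomp (j:ℤ) 1, hsum2 (j:ℤ) 0, hsum2 (j:ℤ) 1,
          hs1 (d (j:ℤ)), hs1 (m (j:ℤ)), hs3 (m (j:ℤ))]
        simp only [Matrix.cons_val_zero, Matrix.cons_val_one, Matrix.head_cons,
          _root_.map_mul, map_add, map_sub, map_neg, Complex.conj_I, Complex.conj_ofReal]
        push_cast
        ring
      rw [Fin.sum_univ_two, Fin.sum_univ_two]
      have e0 := normSq_diff (Φ (n+1) (j:ℤ) 0) (Φ n (j:ℤ) 0)
      have e1 := normSq_diff (Φ (n+1) (j:ℤ) 1) (Φ n (j:ℤ) 1)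
      have hL : ((starRingEnd ℂ) (m (j:ℤ) 0) * m (j:ℤ) 0 -
              (starRingEnd ℂ) (m (j:ℤ) 1) * m (j:ℤ) 1 +
              (ε:ℂ) * (((Vh n (j:ℤ) : ℝ):ℂ) *
                  ((starRingEnd ℂ) (m (j:ℤ) 0) * m (j:ℤ) 0 +
                   (starRingEnd ℂ) (m (j:ℤ) 1) * m (j:ℤ) 1) -
                ((Ah n (j:ℤ) : ℝ):ℂ) *
                  ((starRingEnd ℂ) (m (j:ℤ) 1) * m (j:ℤ) 0 +
                   (starRingEnd ℂ) (m (j:ℤ) 0) * m (j:ℤ) 1))).im = 0 := by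
        simp [Complex.add_im, Complex.sub_im, Complex.mul_im, Complex.mul_re,
          Complex.conj_re, Complex.conj_im, Complex.ofReal_re, Complex.ofReal_im]
        ring
      calc (‖Φ (n+1) (j:ℤ) 0‖^2 + ‖Φ (n+1) (j:ℤ) 1‖^2) -
            (‖Φ n (j:ℤ) 0‖^2 + ‖Φ n (j:ℤ) 1‖^2)
          = (‖Φ (n+1) (j:ℤ) 0‖^2 - ‖Φ n (j:ℤ) 0‖^2) +
            (‖Φ (n+1) (j:ℤ) 1‖^2 - ‖Φ n (j:ℤ) 1‖^2) := by ring
        _ = ((starRingEnd ℂ) (Φ (n+1) (j:ℤ) 0 - Φ n (j:ℤ) 0) *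
              (Φ (n+1) (j:ℤ) 0 + Φ n (j:ℤ) 0) +
             (starRingEnd ℂ) (Φ (n+1) (j:ℤ) 1 - Φ n (j:ℤ) 1) *
              (Φ (n+1) (j:ℤ) 1 + Φ n (j:ℤ) 1)).re := by
            rw [Complex.add_re, e0, e1]
        _ = (-(2*τ)) * (Complex.I * (starRingEnd ℂ) (d (j:ℤ) 1) * m (j:ℤ) 0 +
              Complex.I * (starRingEnd ℂ) (d (j:ℤ) 0) * m (j:ℤ) 1).im := by
            rw [hz]
            rw [Complex.mul_re, Complex.ofReal_re, Complex.ofReal_im, Complex.mul_im,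
              Complex.mul_re, Complex.I_re, Complex.I_im, Complex.add_im, hL, add_zero]
            ring_nf
    rw [← sub_eq_zero, ← Finset.sum_sub_distrib]
    calc (∑ j ∈ Finset.range N,
            ((∑ i, ‖Φ (n+1) (j:ℤ) i‖ ^ 2) - ∑ i, ‖Φ n (j:ℤ) i‖ ^ 2))
        = ∑ j ∈ Finset.range N, (-(2*τ)) *
            (Complex.I * (starRingEnd ℂ) (d (j:ℤ) 1) * m (j:ℤ) 0 +
             Complex.I * (starRingEnd ℂ) (d (j:ℤ) 0) * m (j:ℤ) 1).im :=
          Finset.sum_congr rfl fun j _ => hj j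
      _ = (-(2*τ)) * (∑ j ∈ Finset.range N,
            (Complex.I * (starRingEnd ℂ) (d (j:ℤ) 1) * m (j:ℤ) 0 +
             Complex.I * (starRingEnd ℂ) (d (j:ℤ) 0) * m (j:ℤ) 1)).im := by
          rw [Complex.im_sum, Finset.mul_sum]
      _ = 0 := by rw [hd, QD_im_zero, mul_zero]
  intro n
  induction n with
  | zero => rfl
  | succ n ih => rw [key n]; exact ih

end
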